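/- If the cocycle f is recurrent, then both sets R₊ = {x ∈ X : (x,e) lies in the closure of {T_f^n(x,e) : n > 0}} and R₋ = {x ∈ X : (x,e) lies in the closure of {T_f^n(x,e) : n < 0}} are comeager subsets of X (their complements are meager). -/

import Mathlib

open Topology Pointwise Set Filter

section Defs

variable {X : Type*} [TopologicalSpace X] {G : Type*} [TopologicalSpace G] [Group G]

/-- The positive-iterate part of the cocycle generated by `f` over `T`:
`f(n,x) = f(T^{n-1}x) ⋯ f(Tx) · f(x)` for `n ≥ 1` and `f(0,x) = e`. -/
def cocycleNat (T : X ≃ₜ X) (f : X → G) : ℕ → X → G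
  | 0, _ => 1
  | n + 1, x => f ((T.toEquiv ^ n) x) * cocycleNat T f n x

/-- The cocycle generated by `f` over `T`, at integer times:
`f(n,x)` as above for `n ≥ 0` and `f(n,x) = f(-n, T^n x)⁻¹` for `n < 0`. -/
def cocycle (T : X ≃ₜ X) (f : X → G) (n : ℤ) (x : X) : G :=
  if 0 ≤ n then cocycleNat T f n.toNat x
  else (cocycleNat T f (-n).toNat ((T.toEquiv ^ n) x))⁻¹

/-- The `n`-th power of the skew product `T_f` on `X × G`:
`T_f^n (x,g) = (T^n x, f(n,x)·g)`. -/
def skewPow (T : X ≃ₜ X) (f : X → G) (n : ℤ) (p : X × G) : X × G :=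
  ((T.toEquiv ^ n) p.1, cocycle T f n p.1 * p.2)

/-- The `n`-th power of the skew product `T_f` acting on `X × G/H`:
`T_f^n (x, gH) = (T^n x, f(n,x)·gH)`. -/
def skewPowQ (T : X ≃ₜ X) (f : X → G) (H : Subgroup G) (n : ℤ) (p : X × (G ⧸ H)) :
    X × (G ⧸ H) :=
  ((T.toEquiv ^ n) p.1, cocycle T f n p.1 • p.2)

/-- The local essential range `E_x(f)`: all `g ∈ G` such that for every open
neighbourhood `U` of `x` and every open neighbourhood `V` of the identity there are
`n ∈ ℤ` and `y ∈ U ∩ T⁻ⁿU` with `f(n,y) ∈ V·g`. -/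
def essRange (T : X ≃ₜ X) (f : X → G) (x : X) : Set G :=
  {g | ∀ U : Set X, IsOpen U → x ∈ U → ∀ V : Set G, IsOpen V → (1 : G) ∈ V →
    ∃ n : ℤ, ∃ y ∈ U, (T.toEquiv ^ n) y ∈ U ∧ ∃ v ∈ V, cocycle T f n y = v * g}

/-- `P_x(f)`: the vertical section at `x` of the closure of the `T_f`-orbit of `(x,e)`. -/
def Pset (T : X ≃ₜ X) (f : X → G) (x : X) : Set G :=
  {g | (x, g) ∈ closure (Set.range fun n : ℤ => skewPow T f n (x, 1))}

/-- `𝒟(f) = {x : E_x(f) = P_x(f)}`. -/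
def Dset (T : X ≃ₜ X) (f : X → G) : Set X :=
  {x | essRange T f x = Pset T f x}

/-- Topological recurrence of the cocycle generated by `f`: for every open
neighbourhood `V` of the identity of `G` and every nonempty open `U ⊆ X` there is
`n ≠ 0` with `T⁻ⁿU ∩ U ∩ {x : f(n,x) ∈ V} ≠ ∅`. -/
def IsRecurrentCocycle (T : X ≃ₜ X) (f : X → G) : Prop :=
  ∀ V : Set G, IsOpen V → (1 : G) ∈ V → ∀ U : Set X, IsOpen U → U.Nonempty →
    ∃ n : ℤ, n ≠ 0 ∧ ∃ x ∈ U, (T.toEquiv ^ n) x ∈ U ∧ cocycle T f n x ∈ V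

/-- Minimality of a homeomorphism: every orbit is dense. -/
def IsMinimal (T : X ≃ₜ X) : Prop :=
  ∀ x : X, Dense (Set.range fun n : ℤ => (T.toEquiv ^ n) x)

/-- A consistent selection of subgroups for the cocycle generated by `f`: a family of
closed subgroups `H x ⊆ E_x(f)` with `H (Tⁿx) = f(n,x)·(H x)·f(n,x)⁻¹` depending
continuously on `x` for the Fell topology. -/
structure IsConsistentSelection (T : X ≃ₜ X) (f : X → G) (H : X → Subgroup G) : Prop where
  isClosed : ∀ x : X, IsClosed (H x : Set G)
  subset_essRange : ∀ x : X, (H x : Set G) ⊆ essRange T f x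
  conj : ∀ (x : X) (n : ℤ), (H ((T.toEquiv ^ n) x) : Set G) =
    (fun h => cocycle T f n x * h * (cocycle T f n x)⁻¹) '' (H x : Set G)
  fell_compact : ∀ (x : X) (K : Set G), IsCompact K → K ∩ (H x : Set G) = ∅ →
    ∃ W ∈ 𝓝 x, ∀ y ∈ W, K ∩ (H y : Set G) = ∅
  fell_open : ∀ (x : X) (O : Set G), IsOpen O → (O ∩ (H x : Set G)).Nonempty →
    ∃ W ∈ 𝓝 x, ∀ y ∈ W, (O ∩ (H y : Set G)).Nonempty

/-- The `T_f`-orbit closure of a point of `X × G`. -/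
def orbitClosure (T : X ≃ₜ X) (f : X → G) (p : X × G) : Set (X × G) :=
  closure (Set.range fun n : ℤ => skewPow T f n p)

/-- For `C ⊆ X × G`, the set `H = {g : C·g⁻¹ = C}`, where `C·g = {(y, c·g) : (y,c) ∈ C}`. -/
def stabSet (C : Set (X × G)) : Set G :=
  {g : G | (fun p : X × G => (p.1, p.2 * g⁻¹)) '' C = C}

/-- A strongly regular orbit closure: a `T_f`-orbit closure which projects onto all
of `X` and all of whose vertical sections are single left cosets of
`H = {g : C·g⁻¹ = C}`. -/
def IsStronglyRegularOC (T : X ≃ₜ X) (f : X → G) (C : Set (X × G)) : Prop :=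
  (∃ p : X × G, C = orbitClosure T f p) ∧ Prod.fst '' C = Set.univ ∧
    ∀ x : X, ∃ gx : G, {g : G | (x, g) ∈ C} = {gx} * stabSet C

/-- A strongly regular cocycle: one whose skew product admits a strongly regular
orbit closure. -/
def IsStronglyRegularCocycle (T : X ≃ₜ X) (f : X → G) : Prop :=
  ∃ C : Set (X × G), IsStronglyRegularOC T f C

/-- A regular cocycle: some `T_f`-orbit closure projects onto all of `X`. -/
def IsRegularCocycle (T : X ≃ₜ X) (f : X → G) : Prop :=
  ∃ p : X × G, Prod.fst '' orbitClosure T f p = Set.univ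

end Defs

section Aux

variable {X : Type*} [TopologicalSpace X] {G : Type*} [TopologicalSpace G] [Group G]

lemma continuous_equivPow (T : X ≃ₜ X) : ∀ n : ℕ, Continuous fun x => (T.toEquiv ^ n) x
  | 0 => by simpa using continuous_id'
  | n + 1 => by
      have h := continuous_equivPow T n
      have he : (fun x => (T.toEquiv ^ (n + 1)) x) = fun x => (T.toEquiv ^ n) (T x) := by
        funext x; rw [pow_succ]; rfl
      rw [he]; exact h.comp T.continuous

lemma continuous_equivZPow (T : X ≃ₜ X) (n : ℤ) : Continuous fun x => (T.toEquiv ^ n) x := by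
  obtain ⟨m, rfl | rfl⟩ := n.eq_nat_or_neg
  · simpa [zpow_natCast] using continuous_equivPow T m
  · rw [zpow_neg, zpow_natCast, ← inv_pow]
    have he : (T.toEquiv)⁻¹ = T.symm.toEquiv := rfl
    rw [he]
    exact continuous_equivPow T.symm m

lemma continuous_cocycleNat [IsTopologicalGroup G] (T : X ≃ₜ X) {f : X → G} (hf : Continuous f) :
    ∀ n : ℕ, Continuous (cocycleNat T f n)
  | 0 => continuous_const
  | n + 1 => by
      show Continuous fun x => f ((T.toEquiv ^ n) x) * cocycleNat T f n x
      exact (hf.comp (continuous_equivPow T n)).mul (continuous_cocycleNat T hf n)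

lemma continuous_cocycle [IsTopologicalGroup G] (T : X ≃ₜ X) {f : X → G} (hf : Continuous f)
    (n : ℤ) : Continuous (cocycle T f n) := by
  unfold cocycle
  by_cases h : 0 ≤ n
  · simp only [h, if_true]
    exact continuous_cocycleNat T hf _
  · simp only [h, if_false]
    exact ((continuous_cocycleNat T hf _).comp (continuous_equivZPow T n)).inv

lemma cocycle_neg (T : X ≃ₜ X) (f : X → G) (n : ℤ) (x : X) :
    cocycle T f (-n) ((T.toEquiv ^ n) x) = (cocycle T f n x)⁻¹ := by
  rcases lt_trichotomy n 0 with h | rfl | h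
  · have h1 : 0 ≤ -n := by omega
    have h2 : ¬ 0 ≤ n := by omega
    rw [cocycle, cocycle, if_pos h1, if_neg h2, inv_inv]
  · simp [cocycle, cocycleNat]
  · have h1 : ¬ 0 ≤ -n := by omega
    have h2 : 0 ≤ n := le_of_lt h
    rw [cocycle, cocycle, if_neg h1, if_pos h2, neg_neg, zpow_neg,
      Equiv.Perm.inv_def, Equiv.symm_apply_apply]

lemma key_meagre {X : Type*} [TopologicalSpace X] [CompactSpace X]
    [TopologicalSpace.MetrizableSpace X]
    {G : Type*} [TopologicalSpace G] [Group G] [IsTopologicalGroup G] [SecondCountableTopology G]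
    (T : X ≃ₜ X) (f : X → G) (hf : Continuous f)
    (hrec : IsRecurrentCocycle T f) (P : ℤ → Prop) (hP : ∀ n : ℤ, n ≠ 0 → P n ∨ P (-n)) :
    IsMeagre {x : X | (x, (1 : G)) ∈
      closure {p : X × G | ∃ n : ℤ, P n ∧ p = skewPow T f n (x, 1)}}ᶜ := by
  letI := TopologicalSpace.metrizableSpaceMetric X
  haveI : SecondCountableTopology X := inferInstance
  obtain ⟨bX, hbXc, -, hbX⟩ := TopologicalSpace.exists_countable_basis X
  obtain ⟨bG, hbGc, -, hbG⟩ := TopologicalSpace.exists_countable_basis G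
  set ι : Set (Set X × Set G) := {q | q.1 ∈ bX ∧ q.2 ∈ bG ∧ (1 : G) ∈ q.2} with hι
  haveI : Countable ι := by
    have hsub : ι ⊆ bX ×ˢ bG := fun q hq => ⟨hq.1, hq.2.1⟩
    exact ((hbXc.prod hbGc).mono hsub).to_subtype
  set D : ι → Set X := fun q =>
    (closure q.1.1)ᶜ ∪ (q.1.1 ∩
      {x | ∃ n : ℤ, P n ∧ (T.toEquiv ^ n) x ∈ q.1.1 ∧ cocycle T f n x ∈ q.1.2}) with hD
  have hDopen : ∀ q, IsOpen (D q) := by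
    intro q
    refine isClosed_closure.isOpen_compl.union ((hbX.isOpen q.2.1).inter ?_)
    have he : {x | ∃ n : ℤ, P n ∧ (T.toEquiv ^ n) x ∈ q.1.1 ∧ cocycle T f n x ∈ q.1.2}
        = ⋃ n : ℤ, {x | P n ∧ (T.toEquiv ^ n) x ∈ q.1.1 ∧ cocycle T f n x ∈ q.1.2} := by
      ext x; simp [mem_iUnion]
    rw [he]
    refine isOpen_iUnion fun n => ?_
    by_cases hPn : P n
    · have he2 : {x | P n ∧ (T.toEquiv ^ n) x ∈ q.1.1 ∧ cocycle T f n x ∈ q.1.2}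
          = (fun x => (T.toEquiv ^ n) x) ⁻¹' q.1.1 ∩ (cocycle T f n) ⁻¹' q.1.2 := by
        ext x; simp [hPn, mem_preimage]
      rw [he2]
      exact ((hbX.isOpen q.2.1).preimage (continuous_equivZPow T n)).inter
        ((hbG.isOpen q.2.2.1).preimage (continuous_cocycle T hf n))
    · have he2 : {x | P n ∧ (T.toEquiv ^ n) x ∈ q.1.1 ∧ cocycle T f n x ∈ q.1.2} = ∅ := by
        ext x; simp [hPn]
      rw [he2]; exact isOpen_empty
  have hDdense : ∀ q, Dense (D q) := by
    intro q
    rw [dense_iff_inter_open]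
    intro U hU hUne
    by_cases h : ∀ z ∈ U, z ∈ closure q.1.1
    · obtain ⟨u, hu⟩ := hUne
      have hUB : (U ∩ q.1.1).Nonempty := mem_closure_iff.mp (h u hu) U hU hu
      set V' : Set G := q.1.2 ∩ (·⁻¹) ⁻¹' q.1.2 with hV'
      have hV'open : IsOpen V' :=
        (hbG.isOpen q.2.2.1).inter ((hbG.isOpen q.2.2.1).preimage continuous_inv)
      have h1V' : (1 : G) ∈ V' := ⟨q.2.2.2, by simpa using q.2.2.2⟩
      obtain ⟨n, hn0, z, hz, hTz, hcoc⟩ := hrec V' hV'open h1V' (U ∩ q.1.1)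
        (hU.inter (hbX.isOpen q.2.1)) hUB
      rcases hP n hn0 with hPn | hPn
      · exact ⟨z, hz.1, Or.inr ⟨hz.2, n, hPn, hTz.2, hcoc.1⟩⟩
      · refine ⟨(T.toEquiv ^ n) z, hTz.1, Or.inr ⟨hTz.2, -n, hPn, ?_, ?_⟩⟩
        · rw [zpow_neg, Equiv.Perm.inv_def, Equiv.symm_apply_apply]; exact hz.2
        · rw [cocycle_neg]; exact hcoc.2
    · push_neg at h
      obtain ⟨z, hzU, hz⟩ := h
      exact ⟨z, hzU, Or.inl hz⟩
  unfold IsMeagre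
  rw [compl_compl]
  refine mem_of_superset
    (countable_iInter_mem.mpr fun q => residual_of_dense_open (hDopen q) (hDdense q)) ?_
  intro x hx
  rw [mem_iInter] at hx
  show (x, (1 : G)) ∈ closure _
  rw [mem_closure_iff]
  intro O hO hxO
  obtain ⟨u, v, hu, hv, hxu, h1v, huv⟩ := isOpen_prod_iff.mp hO x 1 hxO
  obtain ⟨B, hB, hxB, hBu⟩ := hbX.exists_subset_of_mem_open hxu hu
  obtain ⟨V, hV, h1V, hVv⟩ := hbG.exists_subset_of_mem_open h1v hv
  have hq : ((B, V) : Set X × Set G) ∈ ι := ⟨hB, hV, h1V⟩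
  rcases hx ⟨(B, V), hq⟩ with hc | ⟨-, n, hPn, hTn, hcoc⟩
  · exact absurd (subset_closure hxB) hc
  · have hmem : skewPow T f n (x, 1) ∈ u ×ˢ v := by
      refine ⟨hBu hTn, ?_⟩
      show cocycle T f n x * 1 ∈ v
      rw [mul_one]; exact hVv hcoc
    exact ⟨skewPow T f n (x, 1), huv hmem, n, hPn, rfl⟩

end Aux

theorem statement_19
    {X : Type*} [TopologicalSpace X] [CompactSpace X] [TopologicalSpace.MetrizableSpace X]
    {G : Type*} [TopologicalSpace G] [Group G] [IsTopologicalGroup G]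
    [LocallyCompactSpace G] [SecondCountableTopology G] [T2Space G]
    (T : X ≃ₜ X) (hT : IsMinimal T) (f : X → G) (hf : Continuous f)
    (hrec : IsRecurrentCocycle T f) :
    IsMeagre {x : X | (x, (1 : G)) ∈
      closure {p : X × G | ∃ n : ℤ, 0 < n ∧ p = skewPow T f n (x, 1)}}ᶜ ∧
    IsMeagre {x : X | (x, (1 : G)) ∈
      closure {p : X × G | ∃ n : ℤ, n < 0 ∧ p = skewPow T f n (x, 1)}}ᶜ := by
  exact ⟨key_meagre T f hf hrec (fun n => 0 < n) (fun n hn => by omega),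
    key_meagre T f hf hrec (fun n => n < 0) (fun n hn => by omega)⟩
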